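/- Let d > k > 0 be integers and suppose (h'_0,...,h'_d) and (β_0,...,β_{d-1}) are sequences of nonnegative integers satisfying: h'_j = h_j + C(d,j)*∑_{i=0}^{j-1}(-1)^{j-i-1}*β_{i-1} (with β_{-1}=0) where h_0=1, h_i=0 for 0<i≤k, h_i=(-1)^{i-k+1}*C(d,i) for k<i≤d; and h'_j ≥ C(d,j)*β_{j-1} for 1 ≤ j ≤ d-1; and h'_d = β_{d-1}. Then β_i = 1 if i = k and 0 otherwise, and h'_j = C(d,j) if j ∈ {0, k+1} and 0 otherwise. -/

import Mathlib

lemma sum_eval_aux (k : ℕ) (β : ℕ → ℤ) (j n : ℕ)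
    (hv : ∀ m, m < n → β m = if m = k then 1 else 0) (hn : j - 1 ≤ n) :
    ∑ m ∈ Finset.range (j - 1), (-1 : ℤ) ^ (j - (m + 1) - 1) * β m
      = if k < j - 1 then (-1 : ℤ) ^ (j - k - 2) else 0 := by
  have hcong : ∀ m ∈ Finset.range (j - 1),
      (-1 : ℤ) ^ (j - (m + 1) - 1) * β m
        = if m = k then (-1 : ℤ) ^ (j - k - 2) else 0 := by
    intro m hm
    rw [Finset.mem_range] at hm
    rw [hv m (lt_of_lt_of_le hm hn)]
    by_cases hmk : m = k
    · subst hmk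
      rw [if_pos rfl, if_pos rfl, mul_one, show j - (m + 1) - 1 = j - m - 2 by omega]
    · rw [if_neg hmk, if_neg hmk, mul_zero]
  rw [Finset.sum_congr rfl hcong,
    Finset.sum_ite_eq' (Finset.range (j - 1)) k (fun _ => (-1 : ℤ) ^ (j - k - 2))]
  simp [Finset.mem_range]

/-- Abstract version of Lemma 3.1: the Novik–Swartz inequalities
`h'_j ≥ C(d,j)·β_{j-1}` combined with the prescribed `h`-vector force
the Betti numbers and `h'`-numbers of `X(k,d)`. -/
theorem stmt10 (d k : ℕ) (hk : 0 < k) (hkd : k < d)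
    (h h' β : ℕ → ℤ)
    (hh0 : h 0 = 1) (hh1 : ∀ i, 0 < i → i ≤ k → h i = 0)
    (hh2 : ∀ i, k < i → i ≤ d → h i = (-1) ^ (i - k + 1) * (d.choose i : ℤ))
    (hβnn : ∀ i, 0 ≤ β i) (hh'nn : ∀ j, 0 ≤ h' j)
    (hdef : ∀ j, j ≤ d →
      h' j = h j + (d.choose j : ℤ) *
        ∑ m ∈ Finset.range (j - 1), (-1 : ℤ) ^ (j - (m + 1) - 1) * β m)
    (hineq : ∀ j, 1 ≤ j → j ≤ d - 1 → (d.choose j : ℤ) * β (j - 1) ≤ h' j)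
    (hlast : h' d = β (d - 1)) :
    (∀ i, i < d → β i = if i = k then 1 else 0) ∧
      (∀ j, j ≤ d → h' j = if j = 0 ∨ j = k + 1 then (d.choose j : ℤ) else 0) := by
  have hβ : ∀ i, i < d → β i = if i = k then 1 else 0 := by
    intro i
    induction i using Nat.strong_induction_on with
    | _ i ih =>
      intro hid
      have ih' : ∀ m, m < i → β m = if m = k then 1 else 0 :=
        fun m hm => ih m hm (hm.trans hid)
      rcases lt_trichotomy i k with hik | hik | hik
      · -- i < k : β i = 0
        rw [if_neg (by omega)]
        have hsum := sum_eval_aux k β (i + 1) i ih' (by omega)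
        rw [if_neg (by omega)] at hsum
        have hdj := hdef (i + 1) (by omega)
        rw [hsum, hh1 (i + 1) (by omega) (by omega), mul_zero, add_zero] at hdj
        have hq := hineq (i + 1) (by omega) (by omega)
        simp only [Nat.add_sub_cancel] at hq
        rw [hdj] at hq
        have hc : (0 : ℤ) < (d.choose (i + 1) : ℤ) := by
          exact_mod_cast Nat.choose_pos (by omega : i + 1 ≤ d)
        nlinarith [hβnn i]
      · -- i = k : β k = 1
        subst hik
        rw [if_pos rfl]
        by_cases hkd1 : i + 1 = d
        · have hsum := sum_eval_aux i β d i ih' (by omega)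
          rw [if_neg (by omega)] at hsum
          have hdj := hdef d le_rfl
          rw [hsum, mul_zero, add_zero, hh2 d hkd le_rfl,
            show d - i + 1 = 2 by omega] at hdj
          rw [hdj, show d - 1 = i by omega] at hlast
          rw [← hlast]
          simp
        · -- k + 2 ≤ d
          have hub : β i ≤ 1 := by
            have hsum := sum_eval_aux i β (i + 1) i ih' (by omega)
            rw [if_neg (by omega)] at hsum
            have hdj := hdef (i + 1) (by omega)
            rw [hsum, mul_zero, add_zero, hh2 (i + 1) (by omega) (by omega),
              show i + 1 - i + 1 = 2 by omega] at hdj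
            have hq := hineq (i + 1) (by omega) (by omega)
            simp only [Nat.add_sub_cancel] at hq
            rw [hdj] at hq
            have hc : (0 : ℤ) < (d.choose (i + 1) : ℤ) := by
              exact_mod_cast Nat.choose_pos (by omega : i + 1 ≤ d)
            nlinarith
          have hlb : 1 ≤ β i := by
            have hdj := hdef (i + 2) (by omega)
            have hsplit : ∑ m ∈ Finset.range (i + 2 - 1),
                (-1 : ℤ) ^ (i + 2 - (m + 1) - 1) * β m = β i := by
              rw [show i + 2 - 1 = i + 1 by omega, Finset.sum_range_succ,
                show i + 2 - (i + 1) - 1 = 0 by omega, pow_zero, one_mul]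
              rw [Finset.sum_eq_zero, zero_add]
              intro m hm
              rw [Finset.mem_range] at hm
              rw [ih' m hm, if_neg (by omega), mul_zero]
            rw [hsplit, hh2 (i + 2) (by omega) (by omega),
              show i + 2 - i + 1 = 3 by omega] at hdj
            have hc : (0 : ℤ) < (d.choose (i + 2) : ℤ) := by
              exact_mod_cast Nat.choose_pos (by omega : i + 2 ≤ d)
            have := hh'nn (i + 2)
            rw [hdj] at this
            nlinarith
          omega
      · -- i > k : β i = 0
        rw [if_neg (by omega)]
        have hsum := sum_eval_aux k β (i + 1) i ih' (by omega)
        rw [if_pos (by omega)] at hsum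
        have hdj := hdef (i + 1) (by omega)
        rw [hsum, hh2 (i + 1) (by omega) (by omega),
          show i + 1 - k + 1 = (i + 1 - k - 2) + 3 by omega, pow_add] at hdj
        have hz : h' (i + 1) = 0 := by rw [hdj]; ring
        by_cases hi1 : i + 1 = d
        · rw [← hi1, hz, Nat.add_sub_cancel] at hlast
          exact hlast.symm
        · have hq := hineq (i + 1) (by omega) (by omega)
          simp only [Nat.add_sub_cancel] at hq
          rw [hz] at hq
          have hc : (0 : ℤ) < (d.choose (i + 1) : ℤ) := by
            exact_mod_cast Nat.choose_pos (by omega : i + 1 ≤ d)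
          nlinarith [hβnn i]
  refine ⟨hβ, ?_⟩
  intro j hjd
  rcases Nat.eq_zero_or_pos j with rfl | hj0
  · have hdj := hdef 0 (by omega)
    simp only [Nat.zero_sub, Finset.range_zero, Finset.sum_empty, mul_zero, add_zero] at hdj
    rw [hdj, hh0]
    simp
  · have hsum := sum_eval_aux k β j (j - 1) (fun m hm => hβ m (by omega)) le_rfl
    have hdj := hdef j hjd
    rcases lt_trichotomy j (k + 1) with hjk | hjk | hjk
    · rw [if_neg (by omega)] at hsum
      rw [hsum, mul_zero, add_zero, hh1 j hj0 (by omega)] at hdj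
      rw [hdj, if_neg (by omega)]
    · subst hjk
      have : k + 1 - 1 = k := by omega
      rw [if_neg (by omega)] at hsum
      rw [hsum, mul_zero, add_zero, hh2 (k + 1) (by omega) hjd,
        show k + 1 - k + 1 = 2 by omega] at hdj
      rw [hdj, if_pos (Or.inr rfl)]
      ring
    · rw [if_pos (by omega)] at hsum
      rw [hsum, hh2 j (by omega) hjd,
        show j - k + 1 = (j - k - 2) + 3 by omega, pow_add] at hdj
      rw [hdj, if_neg (by omega)]
      ring
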